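/- (Horn–Tarski extension theorem, finite case) Every partial measure f on a subset S of a finite Boolean algebra B extends to a normalized measure μ on B with μ|_S = f. -/

import Mathlib

/-- Meet of all elements of a list. -/
def meetAll {B : Type*} [BooleanAlgebra B] (l : List B) : B := l.foldr (· ⊓ ·) ⊤

/-- Join of all `k`-fold meets of (increasing) `k`-element sublists of `l`. -/
def kJoin {B : Type*} [BooleanAlgebra B] (k : ℕ) (l : List B) : B :=
  ((l.sublistsLen k).map meetAll).foldr (· ⊔ ·) ⊥

/-- Horn–Tarski order on sequences: `⟨A_0,…,A_{m−1}⟩ ≤ ⟨B_0,…,B_{n−1}⟩` iff for every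
`k < m` the join of all `(k+1)`-fold meets of the `A`'s is below the analogous join for
the `B`'s. -/
def seqLE {B : Type*} [BooleanAlgebra B] (as bs : List B) : Prop :=
  ∀ k : ℕ, k < as.length → kJoin (k + 1) as ≤ kJoin (k + 1) bs

/-- Horn–Tarski partial measure on a subset `S` containing `⊤`. -/
def IsPartialMeasure {B : Type*} [BooleanAlgebra B] (f : B → ℝ) (S : Set B) : Prop :=
  (⊤ : B) ∈ S ∧ f ⊤ = 1 ∧ (∀ x ∈ S, 0 ≤ f x) ∧
  ∀ as bs : List B, (∀ x ∈ as, x ∈ S) → (∀ x ∈ bs, x ∈ S) → seqLE as bs →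
    (as.map f).sum ≤ (bs.map f).sum

/-- Horn–Tarski exterior measure of `x` with respect to a partial measure `f` on `S`. -/
noncomputable def extMeasure {B : Type*} [BooleanAlgebra B] (f : B → ℝ) (S : Set B)
    (x : B) : ℝ :=
  sInf {ξ : ℝ | ∃ (m : ℕ) (as bs : List B), 0 < m ∧ (∀ y ∈ as, y ∈ S) ∧
    (∀ y ∈ bs, y ∈ S) ∧ seqLE (bs ++ List.replicate m x) as ∧
    ξ = ((as.map f).sum - (bs.map f).sum) / m}

/-- Horn–Tarski interior measure of `x` with respect to a partial measure `f` on `S`. -/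
noncomputable def intMeasure {B : Type*} [BooleanAlgebra B] (f : B → ℝ) (S : Set B)
    (x : B) : ℝ :=
  sSup {ξ : ℝ | ∃ (m : ℕ) (as bs : List B), 0 < m ∧ (∀ y ∈ as, y ∈ S) ∧
    (∀ y ∈ bs, y ∈ S) ∧ seqLE as (bs ++ List.replicate m x) ∧
    ξ = ((as.map f).sum - (bs.map f).sum) / m}

/-- `S` is the carrier of a Boolean subalgebra. -/
def IsSubalgebraSet {B : Type*} [BooleanAlgebra B] (S : Set B) : Prop :=
  (⊤ : B) ∈ S ∧ (⊥ : B) ∈ S ∧ (∀ x ∈ S, xᶜ ∈ S) ∧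
  (∀ x ∈ S, ∀ y ∈ S, x ⊓ y ∈ S) ∧ (∀ x ∈ S, ∀ y ∈ S, x ⊔ y ∈ S)

/-- `m` restricts to a normalized measure on the subset `S`. -/
def IsMeasureOn {B : Type*} [BooleanAlgebra B] (m : B → ℝ) (S : Set B) : Prop :=
  (∀ x ∈ S, 0 ≤ m x) ∧
  (∀ x ∈ S, ∀ y ∈ S, x ⊓ y = ⊥ → m (x ⊔ y) = m x + m y) ∧ m ⊤ = 1

/-- A normalized measure on all of `B`. -/
def IsNormMeasure {B : Type*} [BooleanAlgebra B] (m : B → ℝ) : Prop :=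
  (∀ x, 0 ≤ m x) ∧ (∀ x y : B, x ⊓ y = ⊥ → m (x ⊔ y) = m x + m y) ∧ m ⊤ = 1

set_option linter.unusedSectionVars false


section HTaux
variable {B : Type*} [BooleanAlgebra B]

open Classical in
/-- number of elements of `l` lying above `a` -/
noncomputable def cntP (a : B) (l : List B) : ℕ :=
  l.countP (fun x => decide (a ≤ x))

open Classical

lemma HT_atom_le_sup {a x y : B} (ha : IsAtom a) : a ≤ x ⊔ y ↔ a ≤ x ∨ a ≤ y := by
  constructor
  · intro h
    by_contra hc
    push_neg at hc
    obtain ⟨h1, h2⟩ := hc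
    have hx : a ⊓ x = ⊥ := by
      rcases (ha.le_iff).mp (inf_le_left (b := x)) with h' | h'
      · exact h'
      · exact absurd (by rw [← h']; exact inf_le_right) h1
    have hy : a ⊓ y = ⊥ := by
      rcases (ha.le_iff).mp (inf_le_left (b := y)) with h' | h'
      · exact h'
      · exact absurd (by rw [← h']; exact inf_le_right) h2
    have : a = ⊥ := by
      have := inf_eq_left.mpr h
      rw [inf_sup_left, hx, hy] at this
      simpa using this.symm
    exact ha.1 this
  · rintro (h | h)
    · exact h.trans le_sup_left
    · exact h.trans le_sup_right

lemma HT_atom_le_supList {a : B} (ha : IsAtom a) (L : List B) :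
    a ≤ L.foldr (· ⊔ ·) ⊥ ↔ ∃ y ∈ L, a ≤ y := by
  induction L with
  | nil => simp [le_bot_iff, ha.1]
  | cons x L ih =>
      simp only [List.foldr_cons, HT_atom_le_sup ha, ih, List.mem_cons]
      constructor
      · rintro (h | ⟨y, hy, h⟩)
        · exact ⟨x, Or.inl rfl, h⟩
        · exact ⟨y, Or.inr hy, h⟩
      · rintro ⟨y, (rfl | hy), h⟩
        · exact Or.inl h
        · exact Or.inr ⟨y, hy, h⟩

lemma HT_le_meetAll {a : B} (l : List B) : a ≤ meetAll l ↔ ∀ y ∈ l, a ≤ y := by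
  induction l with
  | nil => simp [meetAll]
  | cons x l ih => simp [meetAll, le_inf_iff, ih, List.foldr_cons] at *; tauto

lemma HT_atom_le_kJoin {a : B} (ha : IsAtom a) (k : ℕ) (l : List B) :
    a ≤ kJoin k l ↔ k ≤ cntP a l := by
  rw [kJoin, HT_atom_le_supList ha]
  constructor
  · rintro ⟨j, hj, hle⟩
    rw [List.mem_map] at hj
    obtain ⟨m, hm, rfl⟩ := hj
    rw [List.mem_sublistsLen] at hm
    obtain ⟨hsub, hlen⟩ := hm
    rw [HT_le_meetAll] at hle
    calc k = m.length := hlen.symm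
    _ = m.countP (fun x => decide (a ≤ x)) := by
        symm; rw [List.countP_eq_length]; intro y hy; simpa using hle y hy
    _ ≤ cntP a l := hsub.countP_le
  · intro hk
    set p : B → Bool := fun x => decide (a ≤ x) with hp
    refine ⟨meetAll ((l.filter p).take k), List.mem_map.2
      ⟨(l.filter p).take k, List.mem_sublistsLen.2 ⟨?_, ?_⟩, rfl⟩, ?_⟩
    · exact (List.take_sublist _ _).trans (List.filter_sublist (l := l))
    · have : cntP a l = (l.filter p).length := by
        rw [cntP, List.countP_eq_length_filter]
      rw [List.length_take]
      omega
    · rw [HT_le_meetAll]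
      intro y hy
      have := List.mem_filter.1 ((List.take_sublist _ _).subset hy)
      simpa [hp] using this.2

lemma HT_seqLE_of_cnt [Fintype B] (as bs : List B)
    (h : ∀ a : B, IsAtom a → cntP a as ≤ cntP a bs) : seqLE as bs := by
  intro k _
  refine BooleanAlgebra.le_iff_atom_le_imp.2 fun a ha hle => ?_
  rw [HT_atom_le_kJoin ha] at hle ⊢
  exact hle.trans (h a ha)

/-- list with `g s` copies of `v s` for each `s` in `L` -/
def repList {ι : Type*} (g : ι → ℕ) (v : ι → B) : List ι → List B
  | [] => []
  | s :: r => List.replicate (g s) (v s) ++ repList g v r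

lemma HT_mem_repList {ι : Type*} {g : ι → ℕ} {v : ι → B} {L : List ι} {x : B}
    (hx : x ∈ repList g v L) : ∃ s ∈ L, x = v s := by
  induction L with
  | nil => simp [repList] at hx
  | cons s L ih =>
      rw [repList, List.mem_append] at hx
      rcases hx with h | h
      · exact ⟨s, List.mem_cons_self, List.eq_of_mem_replicate h⟩
      · obtain ⟨t, ht, rfl⟩ := ih h
        exact ⟨t, List.mem_cons_of_mem _ ht, rfl⟩

lemma HT_countP_repList {ι : Type*} (p : B → Bool) (g : ι → ℕ) (v : ι → B) (L : List ι) :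
    (repList g v L).countP p = (L.map (fun s => if p (v s) then g s else 0)).sum := by
  induction L with
  | nil => simp [repList]
  | cons s L ih =>
      rw [repList, List.countP_append, ih, List.map_cons, List.sum_cons,
        List.countP_replicate]

lemma HT_sum_map_repList {ι : Type*} (f : B → ℝ) (g : ι → ℕ) (v : ι → B) (L : List ι) :
    ((repList g v L).map f).sum = (L.map (fun s => (g s : ℝ) * f (v s))).sum := by
  induction L with
  | nil => simp [repList]
  | cons s L ih =>
      rw [repList, List.map_append, List.sum_append, ih, List.map_cons, List.sum_cons,
        List.map_replicate, List.sum_replicate, nsmul_eq_mul]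

end HTaux


section Kset
variable {β ι : Type*} [Fintype ι]

lemma HT_K_eq (At : Finset β) (vf : β → ι → ℝ) :
    {g : ι → ℝ | ∃ w : β → ℝ, (∀ b, 0 ≤ w b) ∧ ∑ b ∈ At, w b = 1 ∧
      g = fun s => ∑ b ∈ At, w b * vf b s} = convexHull ℝ (vf '' ↑At) := by
  classical
  apply Set.Subset.antisymm
  · rintro g ⟨w, hw0, hw1, rfl⟩
    have hcm : (fun s => ∑ b ∈ At, w b * vf b s) = At.centerMass w vf := by
      rw [Finset.centerMass, hw1, inv_one, one_smul]
      funext s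
      rw [Finset.sum_apply]
      simp [smul_eq_mul]
    rw [hcm]
    exact At.centerMass_mem_convexHull (fun b _ => hw0 b) (hw1 ▸ one_pos)
      (fun b hb => Set.mem_image_of_mem _ hb)
  · apply convexHull_min
    · rintro _ ⟨b, hb, rfl⟩
      refine ⟨fun b' => if b' = b then 1 else 0, fun b' => by dsimp only; split <;> norm_num,
        ?_, ?_⟩
      · rw [Finset.sum_ite_eq' At b (fun _ => (1:ℝ))]
        simp [Finset.mem_coe.1 hb]
      · funext s
        rw [Finset.sum_congr rfl (g := fun b' => if b' = b then vf b s else 0)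
            (fun b' _ => by dsimp only; split <;> simp_all)]
        rw [Finset.sum_ite_eq' At b (fun _ => vf b s)]
        simp [Finset.mem_coe.1 hb]
    · rintro g1 ⟨w1, hw10, hw11, rfl⟩ g2 ⟨w2, hw20, hw21, rfl⟩ t u ht hu htu
      refine ⟨fun b => t * w1 b + u * w2 b,
        fun b => by have := hw10 b; have := hw20 b; positivity, ?_, ?_⟩
      · rw [Finset.sum_add_distrib, ← Finset.mul_sum, ← Finset.mul_sum, hw11, hw21]
        linarith
      · funext s
        simp only [Pi.add_apply, Pi.smul_apply, smul_eq_mul]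
        rw [Finset.mul_sum, Finset.mul_sum, ← Finset.sum_add_distrib]
        exact Finset.sum_congr rfl (fun b _ => by ring)

end Kset

/-- Horn–Tarski extension theorem (finite case): every partial measure on a subset `S` of a
finite Boolean algebra `B` extends to a normalized measure on `B`. -/
theorem stmt18 (B : Type*) [BooleanAlgebra B] [Fintype B] (S : Set B) (f : B → ℝ)
    (hf : IsPartialMeasure f S) :
    ∃ μ : B → ℝ, IsNormMeasure μ ∧ ∀ x ∈ S, μ x = f x := by
  classical
  obtain ⟨hTS, hfT, hfpos, hmono⟩ := hf
  letI : Fintype ↥S := (Set.toFinite S).fintype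
  set At : Finset B := Finset.univ.filter IsAtom with hAtdef
  have hAtmem : ∀ a : B, IsAtom a → a ∈ At := fun a ha =>
    Finset.mem_filter.2 ⟨Finset.mem_univ _, ha⟩
  have hAtatom : ∀ b ∈ At, IsAtom b := fun b hb => (Finset.mem_filter.1 hb).2
  rcases At.eq_empty_or_nonempty with hAe | hAne
  · exfalso
    have hno : ∀ a : B, ¬ IsAtom a := fun a ha => by
      have := hAtmem a ha; rw [hAe] at this; simp at this
    have hseq : seqLE [⊤, ⊤] [⊤] :=
      HT_seqLE_of_cnt _ _ (fun a ha => absurd ha (hno a))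
    have h2 := hmono [⊤, ⊤] [⊤] (by intro x hx; simp at hx; simp [hx, hTS])
      (by intro x hx; simp at hx; simp [hx, hTS]) hseq
    simp [hfT] at h2
    linarith
  set vf : B → (↥S → ℝ) := fun b s => if b ≤ (s : B) then 1 else 0 with hvf
  set K : Set (↥S → ℝ) := {g | ∃ w : B → ℝ, (∀ b, 0 ≤ w b) ∧ ∑ b ∈ At, w b = 1 ∧
    g = fun s => ∑ b ∈ At, w b * vf b s} with hKdef
  have hKhull : K = convexHull ℝ (vf '' ↑At) := HT_K_eq At vf
  have hFK : (fun s : ↥S => f (s : B)) ∈ K := by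
    by_contra hFK
    have hKconv : Convex ℝ K := hKhull ▸ convex_convexHull ℝ _
    have hKclosed : IsClosed K := hKhull ▸ (At.finite_toSet.image vf).isClosed_convexHull (𝕜 := ℝ)
    obtain ⟨g, u, hgF, hgK⟩ := geometric_hahn_banach_point_closed hKconv hKclosed hFK
    set c : ↥S → ℝ := fun s => g (Pi.single s 1) with hc
    have hgrep : ∀ h : ↥S → ℝ, g h = ∑ s : ↥S, h s * c s := by
      intro h
      conv_lhs => rw [← Finset.univ_sum_single h, map_sum]
      refine Finset.sum_congr rfl fun s _ => ?_
      have hsingle : Pi.single s (h s) = h s • (Pi.single s 1 : ↥S → ℝ) := by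
        funext t
        by_cases hts : t = s <;> simp [Pi.single_apply, hts]
      rw [hsingle, map_smul, smul_eq_mul]
    have hu_lt : ∀ b ∈ At, u < ∑ s : ↥S, vf b s * c s := by
      intro b hb
      rw [← hgrep]
      exact hgK _ (hKhull ▸ subset_convexHull ℝ _ (Set.mem_image_of_mem _ hb))
    have hF_lt : ∑ s : ↥S, f (s : B) * c s < u := by
      rw [hgrep] at hgF; exact hgF
    set v : ℝ := At.inf' hAne (fun b => ∑ s : ↥S, vf b s * c s) with hv
    have hvu : u < v := (Finset.lt_inf'_iff hAne).2 hu_lt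
    set ε : ℝ := min (u - ∑ s : ↥S, f (s : B) * c s) (v - u) with hε
    have hεpos : 0 < ε := lt_min (by linarith) (by linarith)
    set M : ℝ := ∑ s : ↥S, (|f (s : B)| + 1) with hM
    have hScard : 0 < Fintype.card ↥S := Fintype.card_pos_iff.2 ⟨⟨⊤, hTS⟩⟩
    have hMcard : (Fintype.card ↥S : ℝ) ≤ M := by
      rw [hM]
      calc (Fintype.card ↥S : ℝ) = ∑ _s : ↥S, (1 : ℝ) := by
            simp [Finset.card_univ]
      _ ≤ _ := Finset.sum_le_sum fun s _ => by linarith [abs_nonneg (f (s : B))]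
    have hM0 : 0 < M := lt_of_lt_of_le (by exact_mod_cast hScard) hMcard
    obtain ⟨N, hN⟩ := exists_nat_gt (M / ε)
    have hNε : M < N * ε := by
      rw [div_lt_iff₀ hεpos] at hN; linarith
    have hN0 : (0 : ℝ) < N := lt_trans (div_pos hM0 hεpos) hN
    set c' : ↥S → ℤ := fun s => ⌊(N : ℝ) * c s⌋ with hc'
    have hc'le : ∀ s, (c' s : ℝ) ≤ N * c s := fun s => Int.floor_le _
    have hc'gt : ∀ s, (N : ℝ) * c s - 1 < c' s := fun s => Int.sub_one_lt_floor _
    have hA : ∑ s : ↥S, (c' s : ℝ) * f (s : B) < N * u := by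
      have h1 : ∑ s : ↥S, (c' s : ℝ) * f (s : B)
          ≤ ∑ s : ↥S, ((N : ℝ) * c s * f (s : B) + |f (s : B)|) := by
        refine Finset.sum_le_sum fun s _ => ?_
        have h2 : ((c' s : ℝ) - N * c s) * f (s : B) ≤ |f (s : B)| := by
          calc ((c' s : ℝ) - N * c s) * f (s : B)
              ≤ |((c' s : ℝ) - N * c s) * f (s : B)| := le_abs_self _
          _ = |(c' s : ℝ) - N * c s| * |f (s : B)| := abs_mul _ _
          _ ≤ 1 * |f (s : B)| := by
              refine mul_le_mul_of_nonneg_right ?_ (abs_nonneg _)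
              rw [abs_le]
              constructor
              · linarith [hc'gt s]
              · linarith [hc'le s]
          _ = |f (s : B)| := one_mul _
        nlinarith [h2]
      have h3 : ∑ s : ↥S, ((N : ℝ) * c s * f (s : B) + |f (s : B)|)
          = N * (∑ s : ↥S, f (s : B) * c s) + ∑ s : ↥S, |f (s : B)| := by
        rw [Finset.sum_add_distrib, Finset.mul_sum]
        congr 1
        exact Finset.sum_congr rfl fun s _ => by ring
      have h4 : ∑ s : ↥S, |f (s : B)| ≤ M :=
        Finset.sum_le_sum fun s _ => by linarith [abs_nonneg (f (s : B))]
      have h5 : ε ≤ u - ∑ s : ↥S, f (s : B) * c s := min_le_left _ _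
      have h6 : (N : ℝ) * ε ≤ N * (u - ∑ s : ↥S, f (s : B) * c s) := by
        apply mul_le_mul_of_nonneg_left h5 (le_of_lt hN0)
      calc ∑ s : ↥S, (c' s : ℝ) * f (s : B)
          ≤ N * (∑ s : ↥S, f (s : B) * c s) + ∑ s : ↥S, |f (s : B)| := by
            rw [← h3]; exact h1
      _ ≤ N * (∑ s : ↥S, f (s : B) * c s) + M := by linarith
      _ < N * (∑ s : ↥S, f (s : B) * c s) + N * ε := by linarith
      _ ≤ N * u := by nlinarith [h6]
    have hB : ∀ b ∈ At, (N : ℝ) * u < ∑ s : ↥S, (c' s : ℝ) * vf b s := by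
      intro b hb
      have h1 : ∑ s : ↥S, ((N : ℝ) * c s * vf b s - vf b s)
          ≤ ∑ s : ↥S, (c' s : ℝ) * vf b s := by
        refine Finset.sum_le_sum fun s _ => ?_
        by_cases hbs : b ≤ (s : B)
        · simp only [hvf, hbs, if_true, mul_one]
          linarith [hc'gt s]
        · simp [hvf, hbs]
      have h2 : ∑ s : ↥S, ((N : ℝ) * c s * vf b s - vf b s)
          = N * (∑ s : ↥S, vf b s * c s) - ∑ s : ↥S, vf b s := by
        rw [Finset.sum_sub_distrib, Finset.mul_sum]
        congr 1
        exact Finset.sum_congr rfl fun s _ => by ring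
      have h3 : ∑ s : ↥S, vf b s ≤ M := by
        refine Finset.sum_le_sum fun s _ => ?_
        have h0 := abs_nonneg (f (s : B))
        have h1 : vf b s ≤ 1 := by
          simp only [hvf]
          split <;> norm_num
        linarith
      have h4 : ε ≤ v - u := min_le_right _ _
      have h5 : v ≤ ∑ s : ↥S, vf b s * c s := Finset.inf'_le _ hb
      have h6 : (N : ℝ) * (u + ε) ≤ N * (∑ s : ↥S, vf b s * c s) := by
        apply mul_le_mul_of_nonneg_left (by linarith) (le_of_lt hN0)
      calc (N : ℝ) * u = N * (u + ε) - N * ε := by ring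
      _ < N * (u + ε) - M := by linarith
      _ ≤ N * (∑ s : ↥S, vf b s * c s) - M := by linarith
      _ ≤ N * (∑ s : ↥S, vf b s * c s) - ∑ s : ↥S, vf b s := by linarith
      _ ≤ ∑ s : ↥S, (c' s : ℝ) * vf b s := by rw [← h2]; exact h1
    set t : ℤ := ⌊(N : ℝ) * u⌋ + 1 with ht
    have htu : (N : ℝ) * u < t := by
      rw [ht]; push_cast; exact Int.lt_floor_add_one _
    have htB : ∀ b ∈ At, t ≤ ∑ s : ↥S, c' s * (if b ≤ (s : B) then (1 : ℤ) else 0) := by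
      intro b hb
      have hcast : ((∑ s : ↥S, c' s * (if b ≤ (s : B) then (1 : ℤ) else 0) : ℤ) : ℝ)
          = ∑ s : ↥S, (c' s : ℝ) * vf b s := by
        push_cast
        refine Finset.sum_congr rfl fun s _ => ?_
        by_cases hbs : b ≤ (s : B) <;> simp [hvf, hbs]
      rw [ht, Int.add_one_le_iff]
      apply Int.floor_lt.2
      rw [hcast]
      exact hB b hb
    set p : ↥S → ℕ := fun s => (c' s).toNat with hp
    set q : ↥S → ℕ := fun s => (-(c' s)).toNat with hq
    have hpq : ∀ s, (p s : ℤ) - q s = c' s := fun s => Int.toNat_sub_toNat_neg _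
    set tp : ℕ := t.toNat with htp
    set tq : ℕ := (-t).toNat with htq
    have htpq : (tp : ℤ) - tq = t := Int.toNat_sub_toNat_neg _
    set L : List ↥S := (Finset.univ : Finset ↥S).toList with hL
    set asl : List B := repList q (fun s : ↥S => (s : B)) L ++ List.replicate tp ⊤ with hasl
    set bsl : List B := repList p (fun s : ↥S => (s : B)) L ++ List.replicate tq ⊤ with hbsl
    have hmemS : ∀ (g : ↥S → ℕ) (n : ℕ),
        ∀ x ∈ repList g (fun s : ↥S => (s : B)) L ++ List.replicate n ⊤, x ∈ S := by
      intro g n x hx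
      rw [List.mem_append] at hx
      rcases hx with h | h
      · obtain ⟨s, _, rfl⟩ := HT_mem_repList h; exact s.2
      · rw [List.eq_of_mem_replicate h]; exact hTS
    have hcnt : ∀ a : B, IsAtom a → cntP a asl ≤ cntP a bsl := by
      intro a ha
      have key : (t : ℤ) ≤ ∑ s : ↥S, c' s * (if a ≤ (s : B) then 1 else 0) :=
        htB a (hAtmem a ha)
      have hcompute : ∀ g : ↥S → ℕ, ∀ n : ℕ,
          cntP a (repList g (fun s : ↥S => (s : B)) L ++ List.replicate n ⊤)
          = (∑ s : ↥S, if a ≤ (s : B) then g s else 0) + n := by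
        intro g n
        rw [cntP, List.countP_append, HT_countP_repList, List.countP_replicate]
        have hrepl : (if (fun x => decide (a ≤ x)) ⊤ = true then n else 0) = n := by
          simp
        rw [hrepl]
        congr 1
        have hmap : (L.map fun s : ↥S =>
            if (fun x => decide (a ≤ x)) ((s : B)) = true then g s else 0)
            = L.map fun s : ↥S => if a ≤ (s : B) then g s else 0 := by
          refine List.map_congr_left fun s _ => ?_
          by_cases hbs : a ≤ (s : B) <;> simp [hbs]
        rw [hmap, hL, Finset.sum_map_toList]
      rw [hcompute, hcompute]
      have hZ : ((∑ s : ↥S, if a ≤ (s : B) then q s else 0 : ℕ) : ℤ) + tp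
          ≤ ((∑ s : ↥S, if a ≤ (s : B) then p s else 0 : ℕ) : ℤ) + tq := by
        push_cast
        have e1 : (∑ s : ↥S, if a ≤ (s : B) then (p s : ℤ) else 0)
            - (∑ s : ↥S, if a ≤ (s : B) then (q s : ℤ) else 0)
            = ∑ s : ↥S, c' s * (if a ≤ (s : B) then 1 else 0) := by
          rw [← Finset.sum_sub_distrib]
          refine Finset.sum_congr rfl fun s _ => ?_
          by_cases hbs : a ≤ (s : B) <;> simp [hbs, hpq s]
        linarith [key, htpq, e1]
      exact_mod_cast hZ
    have hseq := HT_seqLE_of_cnt asl bsl hcnt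
    have hsum := hmono asl bsl (hmemS q tp) (hmemS p tq) hseq
    have hsumcompute : ∀ g : ↥S → ℕ, ∀ n : ℕ,
        (((repList g (fun s : ↥S => (s : B)) L ++ List.replicate n ⊤).map f).sum)
        = (∑ s : ↥S, (g s : ℝ) * f (s : B)) + n := by
      intro g n
      rw [List.map_append, List.sum_append, HT_sum_map_repList, List.map_replicate,
        List.sum_replicate, nsmul_eq_mul, hfT, mul_one, hL, Finset.sum_map_toList]
    rw [hsumcompute, hsumcompute] at hsum
    have e2 : ∑ s : ↥S, (p s : ℝ) * f (s : B) - ∑ s : ↥S, (q s : ℝ) * f (s : B)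
        = ∑ s : ↥S, (c' s : ℝ) * f (s : B) := by
      rw [← Finset.sum_sub_distrib]
      refine Finset.sum_congr rfl fun s _ => ?_
      have : (p s : ℝ) - q s = (c' s : ℝ) := by exact_mod_cast congrArg (Int.cast : ℤ → ℝ) (hpq s)
      rw [← this]
      ring
    have e3 : (tp : ℝ) - tq = (t : ℝ) := by exact_mod_cast congrArg (Int.cast : ℤ → ℝ) htpq
    linarith [hA, htu, hsum, e2, e3]
  obtain ⟨w, hw0, hw1, hFw⟩ := hFK
  refine ⟨fun x => ∑ b ∈ At, w b * (if b ≤ x then 1 else 0), ⟨?_, ?_, ?_⟩, ?_⟩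
  · intro x
    refine Finset.sum_nonneg fun b _ => mul_nonneg (hw0 b) ?_
    split <;> norm_num
  · intro x y hxy
    rw [← Finset.sum_add_distrib]
    refine Finset.sum_congr rfl fun b hb => ?_
    have hbAtom : IsAtom b := hAtatom b hb
    by_cases hx : b ≤ x
    · have hy : ¬ b ≤ y := fun hy => hbAtom.1 (le_bot_iff.1 (hxy ▸ le_inf hx hy))
      have hxy' : b ≤ x ⊔ y := hx.trans le_sup_left
      simp [hx, hy, hxy']
    · by_cases hy : b ≤ y
      · have hxy' : b ≤ x ⊔ y := hy.trans le_sup_right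
        simp [hx, hy, hxy']
      · have hxy' : ¬ b ≤ x ⊔ y := fun h => ((HT_atom_le_sup hbAtom).1 h).elim hx hy
        simp [hx, hy, hxy']
  · simp only [le_top, if_true, mul_one]
    exact hw1
  · intro x hx
    have h := congrFun hFw ⟨x, hx⟩
    simp only [hvf] at h
    exact h.symm
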